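/- arXiv:2310.03822 — 2 statements merged into one kernel-verified Lean document; each statement's English description precedes it below -/
import Mathlib

section
/- Let R be a Noetherian supercommutative superring and M a nonzero R-supermodule. Then the set of associated primes 𝔞𝔰𝔰(M) is nonempty, i.e., there exists a prime ideal 𝔭 of R and a nonzero homogeneous element m ∈ M with 𝔭 = Ann(m). -/
open DirectSum

/-- A `ZMod 2`-grading on a ring is supercommutative if homogeneous elements satisfy the
sign rule `x * y = (-1)^(|x||y|) * (y * x)`. -/
def SuperCommutative {R : Type*} [Ring R] (𝒜 : ZMod 2 → AddSubgroup R) : Prop :=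
  ∀ (i j : ZMod 2) (x y : R), x ∈ 𝒜 i → y ∈ 𝒜 j →
    x * y = ((-1 : ℤ) ^ (i.val * j.val)) • (y * x)

/-- `2` is a non-zerodivisor in `R`. -/
def TwoRegular (R : Type*) [Ring R] : Prop := ∀ x : R, 2 * x = 0 → x = 0

/-- A two-sided ideal is a superideal if it is graded, i.e. it contains the homogeneous
components of each of its elements. -/
def IsSuperIdeal {R : Type*} [Ring R] (𝒜 : ZMod 2 → AddSubgroup R) [GradedRing 𝒜]
    (I : TwoSidedIdeal R) : Prop :=
  ∀ x ∈ I, ∀ i, (DirectSum.decompose 𝒜 x i : R) ∈ I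

/-- An ideal of a superring is prime if the quotient ring is an integral domain. -/
def IsPrimeSuperIdeal {R : Type*} [Ring R] (I : TwoSidedIdeal R) : Prop :=
  IsDomain I.ringCon.Quotient

/-- An ideal of a superring is maximal if the quotient ring is a field. -/
def IsMaximalSuperIdeal {R : Type*} [Ring R] (I : TwoSidedIdeal R) : Prop :=
  IsField I.ringCon.Quotient

/-- A superring is Noetherian if it satisfies the ascending chain condition on superideals. -/
def SuperNoetherian {R : Type*} [Ring R] (𝒜 : ZMod 2 → AddSubgroup R) [GradedRing 𝒜] : Prop :=
  ∀ f : ℕ →o TwoSidedIdeal R, (∀ n, IsSuperIdeal 𝒜 (f n)) → ∃ n, ∀ m, n ≤ m → f m = f n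

/-- The action of a graded ring on a graded module is compatible with the gradings. -/
def GradedSMul {R : Type*} [Ring R] (𝒜 : ZMod 2 → AddSubgroup R)
    {M : Type*} [AddCommGroup M] [Module R M] (ℳ : ZMod 2 → AddSubgroup M) : Prop :=
  ∀ (i j : ZMod 2) (r : R) (m : M), r ∈ 𝒜 i → m ∈ ℳ j → r • m ∈ ℳ (i + j)

section Aux

variable {A : Type*} [AddCommGroup A] (𝒜 : ZMod 2 → AddSubgroup A) [DirectSum.Decomposition 𝒜]

lemma zmod2_eq_sum_decompose (x : A) :
    x = (decompose 𝒜 x 0 : A) + (decompose 𝒜 x 1 : A) := by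
  classical
  have h := DirectSum.sum_support_decompose 𝒜 x
  have h2 : ∑ i : ZMod 2, (decompose 𝒜 x i : A) = x := by
    refine Eq.trans ?_ h
    exact (Finset.sum_subset (Finset.subset_univ _) (fun i _ hi => by
      rw [DFinsupp.notMem_support_iff.mp hi, ZeroMemClass.coe_zero])).symm
  have huniv : (Finset.univ : Finset (ZMod 2)) = {0, 1} := by decide
  calc x = ∑ i : ZMod 2, (decompose 𝒜 x i : A) := h2.symm
    _ = _ := by rw [huniv, Finset.sum_insert (by decide), Finset.sum_singleton]

lemma zmod2_homog_indep {p q : ZMod 2} (hpq : p ≠ q) {a b : A}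
    (ha : a ∈ 𝒜 p) (hb : b ∈ 𝒜 q) (hab : a + b = 0) : a = 0 := by
  have h1 : (decompose 𝒜 (a + b) p : A) = a + 0 := by
    rw [DirectSum.decompose_add, DirectSum.add_apply, AddSubgroup.coe_add,
      DirectSum.decompose_of_mem_same 𝒜 ha, DirectSum.decompose_of_mem_ne 𝒜 hb (Ne.symm hpq)]
  rw [hab] at h1
  simpa using h1.symm

end Aux
section Main

variable {R : Type*} [Ring R] (𝒜 : ZMod 2 → AddSubgroup R) [GradedRing 𝒜]
variable {M : Type*} [AddCommGroup M] [Module R M] (ℳ : ZMod 2 → AddSubgroup M)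
  [DirectSum.Decomposition ℳ]

lemma zmod2_cases (i : ZMod 2) : i = 0 ∨ i = 1 := by
  fin_cases i
  · exact Or.inl rfl
  · exact Or.inr rfl

/-- homogeneous components of an annihilating element annihilate a homogeneous element. -/
lemma smul_decompose_eq_zero (hact : GradedSMul 𝒜 ℳ) {j : ZMod 2} {m : M} (hm : m ∈ ℳ j)
    {r : R} (hr : r • m = 0) (i : ZMod 2) : (decompose 𝒜 r i : R) • m = 0 := by
  have hsum : (decompose 𝒜 r 0 : R) • m + (decompose 𝒜 r 1 : R) • m = 0 := by
    rw [← add_smul, ← zmod2_eq_sum_decompose 𝒜 r, hr]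
  have hne : (0 : ZMod 2) + j ≠ 1 + j := fun h => (by decide : (0 : ZMod 2) ≠ 1) (add_right_cancel h)
  have ha0 := hact 0 j _ m (SetLike.coe_mem (decompose 𝒜 r 0)) hm
  have ha1 := hact 1 j _ m (SetLike.coe_mem (decompose 𝒜 r 1)) hm
  rcases zmod2_cases i with rfl | rfl
  · exact zmod2_homog_indep ℳ hne ha0 ha1 hsum
  · exact zmod2_homog_indep ℳ (Ne.symm hne) ha1 ha0 (by rw [add_comm]; exact hsum)

/-- the sign-rule consequence: if a homogeneous `x` kills `m` then so does `x * y` for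
homogeneous `y`. -/
lemma mul_smul_zero (hsc : SuperCommutative 𝒜) {i j : ZMod 2} {x y : R}
    (hx : x ∈ 𝒜 i) (hy : y ∈ 𝒜 j) {m : M} (hxm : x • m = 0) : (x * y) • m = 0 := by
  rw [hsc i j x y hx hy, zsmul_eq_mul, mul_smul, mul_smul, hxm, smul_zero, smul_zero]

/-- `x * y` kills `m` whenever `x` does, for `m` homogeneous. -/
lemma mul_smul_zero' (hsc : SuperCommutative 𝒜) (hact : GradedSMul 𝒜 ℳ)
    {j : ZMod 2} {m : M} (hm : m ∈ ℳ j) {x : R} (hxm : x • m = 0) (y : R) :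
    (x * y) • m = 0 := by
  have hx0 := smul_decompose_eq_zero 𝒜 ℳ hact hm hxm 0
  have hx1 := smul_decompose_eq_zero 𝒜 ℳ hact hm hxm 1
  have hxy : x * y = ((decompose 𝒜 x 0 : R) * (decompose 𝒜 y 0 : R)
      + (decompose 𝒜 x 0 : R) * (decompose 𝒜 y 1 : R))
      + ((decompose 𝒜 x 1 : R) * (decompose 𝒜 y 0 : R)
      + (decompose 𝒜 x 1 : R) * (decompose 𝒜 y 1 : R)) := by
    rw [← mul_add, ← mul_add, ← add_mul, ← zmod2_eq_sum_decompose 𝒜 x,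
      ← zmod2_eq_sum_decompose 𝒜 y]
  rw [hxy, add_smul, add_smul, add_smul,
    mul_smul_zero 𝒜 hsc (SetLike.coe_mem _) (SetLike.coe_mem _) hx0,
    mul_smul_zero 𝒜 hsc (SetLike.coe_mem _) (SetLike.coe_mem _) hx0,
    mul_smul_zero 𝒜 hsc (SetLike.coe_mem _) (SetLike.coe_mem _) hx1,
    mul_smul_zero 𝒜 hsc (SetLike.coe_mem _) (SetLike.coe_mem _) hx1, add_zero, add_zero]

/-- the annihilator of a homogeneous element as a two-sided ideal. -/
def annIdeal (hsc : SuperCommutative 𝒜) (hact : GradedSMul 𝒜 ℳ) {j : ZMod 2} {m : M}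
    (hm : m ∈ ℳ j) : TwoSidedIdeal R :=
  TwoSidedIdeal.mk' {r : R | r • m = 0}
    (by simp)
    (fun {x y} hx hy => by simp only [Set.mem_setOf_eq] at *; rw [add_smul, hx, hy, add_zero])
    (fun {x} hx => by simp only [Set.mem_setOf_eq] at *; rw [neg_smul, hx, neg_zero])
    (fun {x y} hy => by simp only [Set.mem_setOf_eq] at *; rw [mul_smul, hy, smul_zero])
    (fun {x y} hx => mul_smul_zero' 𝒜 ℳ hsc hact hm hx y)

lemma mem_annIdeal_iff (hsc : SuperCommutative 𝒜) (hact : GradedSMul 𝒜 ℳ) {j : ZMod 2} {m : M}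
    (hm : m ∈ ℳ j) (r : R) : r ∈ annIdeal 𝒜 ℳ hsc hact hm ↔ r • m = 0 :=
  TwoSidedIdeal.mem_mk' _ _ _ _ _ _ r

lemma annIdeal_isSuper (hsc : SuperCommutative 𝒜) (hact : GradedSMul 𝒜 ℳ) {j : ZMod 2} {m : M}
    (hm : m ∈ ℳ j) : IsSuperIdeal 𝒜 (annIdeal 𝒜 ℳ hsc hact hm) := by
  intro x hx i
  rw [mem_annIdeal_iff] at hx ⊢
  exact smul_decompose_eq_zero 𝒜 ℳ hact hm hx i

end Main
/-- Over a Noetherian superring, every nonzero supermodule has an associated prime: a prime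
ideal which is the annihilator of a nonzero homogeneous element. -/
theorem exists_associated_prime {R : Type*} [Ring R]
    (𝒜 : ZMod 2 → AddSubgroup R) [GradedRing 𝒜]
    (hsc : SuperCommutative 𝒜) (h2 : TwoRegular R) (hN : SuperNoetherian 𝒜)
    (M : Type*) [AddCommGroup M] [Module R M] (ℳ : ZMod 2 → AddSubgroup M)
    [DirectSum.Decomposition ℳ] (hact : GradedSMul 𝒜 ℳ)
    (hM : ∃ m : M, m ≠ 0) :
    ∃ 𝔭 : TwoSidedIdeal R, IsPrimeSuperIdeal 𝔭 ∧
      ∃ m : M, m ≠ 0 ∧ (∃ i, m ∈ ℳ i) ∧ ∀ r : R, r ∈ 𝔭 ↔ r • m = 0 := by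
  classical
  -- there exists a nonzero homogeneous element
  obtain ⟨m₀, hm₀⟩ := hM
  have hhom : ∃ (m : M) (i : ZMod 2), m ≠ 0 ∧ m ∈ ℳ i := by
    by_contra h
    push_neg at h
    apply hm₀
    rw [zmod2_eq_sum_decompose ℳ m₀]
    have h0 : (decompose ℳ m₀ 0 : M) = 0 := by
      by_contra h0; exact h _ 0 h0 (SetLike.coe_mem _)
    have h1 : (decompose ℳ m₀ 1 : M) = 0 := by
      by_contra h1; exact h _ 1 h1 (SetLike.coe_mem _)
    rw [h0, h1, add_zero]
  -- the subtype of superideals has the descending chain condition for `>`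
  let T := {I : TwoSidedIdeal R // IsSuperIdeal 𝒜 I}
  have hwf : WellFounded ((· > ·) : T → T → Prop) := by
    refine @IsWellFounded.wf T (· > ·) (wellFoundedGT_iff_monotone_chain_condition.mpr ?_)
    intro f
    obtain ⟨n, hn⟩ := hN ⟨fun k => (f k).1, fun {a b} h => f.monotone h⟩ (fun k => (f k).2)
    exact ⟨n, fun k hk => Subtype.ext (hn k hk).symm⟩
  -- the set of annihilators of nonzero homogeneous elements
  let s : Set T := {I | ∃ m : M, m ≠ 0 ∧ (∃ i, m ∈ ℳ i) ∧ ∀ r : R, r ∈ I.1 ↔ r • m = 0}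
  have hs : s.Nonempty := by
    obtain ⟨m, i, hm, hmi⟩ := hhom
    exact ⟨⟨annIdeal 𝒜 ℳ hsc hact hmi, annIdeal_isSuper 𝒜 ℳ hsc hact hmi⟩,
      m, hm, ⟨i, hmi⟩, mem_annIdeal_iff 𝒜 ℳ hsc hact hmi⟩
  obtain ⟨I, hIs, hImax⟩ := hwf.has_min s hs
  obtain ⟨m, hm, ⟨j, hmj⟩, hIann⟩ := hIs
  -- key: maximality shows "homogeneous primality"
  have hkey : ∀ (i k : ZMod 2) (a b : R), a ∈ 𝒜 i → b ∈ 𝒜 k →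
      (a * b) • m = 0 → a • m = 0 ∨ b • m = 0 := by
    intro i k a b ha hb hab
    by_cases hbm : b • m = 0
    · exact Or.inr hbm
    left
    have hbmj : b • m ∈ ℳ (k + j) := hact k j b m hb hmj
    set J : T := ⟨annIdeal 𝒜 ℳ hsc hact hbmj, annIdeal_isSuper 𝒜 ℳ hsc hact hbmj⟩ with hJ
    have hJs : J ∈ s := ⟨b • m, hbm, ⟨k + j, hbmj⟩, mem_annIdeal_iff 𝒜 ℳ hsc hact hbmj⟩
    have hIJ : I ≤ J := by
      intro r hr
      rw [TwoSidedIdeal.mem_iff] at hr ⊢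
      rw [← TwoSidedIdeal.mem_iff] at hr ⊢
      rw [mem_annIdeal_iff]
      have hrm : r • m = 0 := (hIann r).mp hr
      have h0 := smul_decompose_eq_zero 𝒜 ℳ hact hmj hrm 0
      have h1 := smul_decompose_eq_zero 𝒜 ℳ hact hmj hrm 1
      have e0 : (decompose 𝒜 r 0 : R) • b • m = 0 := by
        rw [← mul_smul]; exact mul_smul_zero 𝒜 hsc (SetLike.coe_mem _) hb h0
      have e1 : (decompose 𝒜 r 1 : R) • b • m = 0 := by
        rw [← mul_smul]; exact mul_smul_zero 𝒜 hsc (SetLike.coe_mem _) hb h1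
      calc r • b • m = ((decompose 𝒜 r 0 : R) + (decompose 𝒜 r 1 : R)) • b • m := by
            rw [← zmod2_eq_sum_decompose 𝒜 r]
        _ = 0 := by rw [add_smul, e0, e1, add_zero]
    have hIJ' : I = J := by
      by_contra hne
      exact hImax J hJs (lt_of_le_of_ne hIJ hne)
    have : a ∈ J.1 := by
      rw [hJ, mem_annIdeal_iff, ← mul_smul]
      exact hab
    rw [← hIJ'] at this
    exact (hIann a).mp this
  -- odd elements annihilate m
  have hodd : ∀ x : R, x ∈ 𝒜 1 → x • m = 0 := by
    intro x hx
    have hsq : x * x = 0 := by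
      have := hsc 1 1 x x hx hx
      have h1 : ((1 : ZMod 2).val * (1 : ZMod 2).val) = 1 := by decide
      rw [h1, pow_one] at this
      apply h2
      rw [two_mul]
      nth_rewrite 1 [this]
      simp
    have := hkey 1 1 x x hx hx (by rw [hsq, zero_smul])
    tauto
  -- primality for general elements
  have hprime : ∀ x y : R, (x * y) • m = 0 → x • m = 0 ∨ y • m = 0 := by
    intro x y hxy
    have hx1 : (decompose 𝒜 x 1 : R) • m = 0 := hodd _ (SetLike.coe_mem _)
    have hy1 : (decompose 𝒜 y 1 : R) • m = 0 := hodd _ (SetLike.coe_mem _)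
    have e01 : ((decompose 𝒜 x 0 : R) * (decompose 𝒜 y 1 : R)) • m = 0 := by
      rw [mul_smul, hy1, smul_zero]
    have e11 : ((decompose 𝒜 x 1 : R) * (decompose 𝒜 y 1 : R)) • m = 0 := by
      rw [mul_smul, hy1, smul_zero]
    have e10 : ((decompose 𝒜 x 1 : R) * (decompose 𝒜 y 0 : R)) • m = 0 :=
      mul_smul_zero 𝒜 hsc (SetLike.coe_mem _) (SetLike.coe_mem _) hx1
    have e : x * y = ((decompose 𝒜 x 0 : R) * (decompose 𝒜 y 0 : R)
        + (decompose 𝒜 x 0 : R) * (decompose 𝒜 y 1 : R))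
        + ((decompose 𝒜 x 1 : R) * (decompose 𝒜 y 0 : R)
        + (decompose 𝒜 x 1 : R) * (decompose 𝒜 y 1 : R)) := by
      rw [← mul_add, ← mul_add, ← add_mul, ← zmod2_eq_sum_decompose 𝒜 x,
        ← zmod2_eq_sum_decompose 𝒜 y]
    rw [e, add_smul, add_smul, add_smul, e01, e10, e11, add_zero, add_zero, add_zero] at hxy
    rcases hkey 0 0 _ _ (SetLike.coe_mem (decompose 𝒜 x 0)) (SetLike.coe_mem (decompose 𝒜 y 0))
        hxy with h | h
    · left
      rw [zmod2_eq_sum_decompose 𝒜 x, add_smul, h, hx1, add_zero]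
    · right
      rw [zmod2_eq_sum_decompose 𝒜 y, add_smul, h, hy1, add_zero]
  -- conclude the quotient is a domain
  refine ⟨I.1, ?_, m, hm, ⟨j, hmj⟩, hIann⟩
  haveI : Nontrivial I.1.ringCon.Quotient := by
    refine ⟨⟨(0 : R), (1 : R), ?_⟩⟩
    intro h
    rw [RingCon.eq] at h
    have h0 : (0 : R) - 1 ∈ I.1 := (TwoSidedIdeal.rel_iff _ _ _).mp h
    have h1 : (1 : R) ∈ I.1 := by
      have := I.1.neg_mem h0
      simpa using this
    have := (hIann 1).mp h1
    rw [one_smul] at this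
    exact hm this
  haveI : NoZeroDivisors I.1.ringCon.Quotient := by
    constructor
    intro a b hab
    obtain ⟨x, rfl⟩ := Quotient.exists_rep a
    obtain ⟨y, rfl⟩ := Quotient.exists_rep b
    have hxy : (x * y) • m = 0 := by
      apply (hIann (x * y)).mp
      have : (↑(x * y) : I.1.ringCon.Quotient) = 0 := hab
      rw [show (0 : I.1.ringCon.Quotient) = ((0 : R) : I.1.ringCon.Quotient) from rfl,
        RingCon.eq] at this
      have := (TwoSidedIdeal.rel_iff _ _ _).mp this
      simpa using this
    rcases hprime x y hxy with h | h
    · left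
      show (↑x : I.1.ringCon.Quotient) = ((0 : R) : I.1.ringCon.Quotient)
      rw [RingCon.eq, TwoSidedIdeal.rel_iff, sub_zero]
      exact (hIann x).mpr h
    · right
      show (↑y : I.1.ringCon.Quotient) = ((0 : R) : I.1.ringCon.Quotient)
      rw [RingCon.eq, TwoSidedIdeal.rel_iff, sub_zero]
      exact (hIann y).mpr h
  exact NoZeroDivisors.to_isDomain _
end

section
/- Let R ⊆ R' ⊆ R'' be supercommutative superrings with compatible gradings. If R'' is integral over R' and R' is integral over R, then R'' is integral over R (transitivity of integral closure for superrings). In particular, the integral closure of R in R' is integrally closed in R'. -/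
open DirectSum

/-- A homogeneous element `b` of the ambient superring is integral over the subring `A`
(with witness module inside the subring `W`): there is a unitary even finitely generated
`A`-supermodule `M = A·g₁ + ⋯ + A·gₙ` with `g₁, …, gₙ` even elements of `W`, `1 ∈ M`,
and `bM ⊆ M`. -/
def IsIntegralElemIn {R : Type*} [Ring R] (𝒜 : ZMod 2 → AddSubgroup R)
    (A W : Subring R) (b : R) : Prop :=
  ∃ (n : ℕ) (g : Fin n → R), (∀ j, g j ∈ 𝒜 0 ∧ g j ∈ W) ∧
    (1 : R) ∈ AddSubgroup.closure {x : R | ∃ a ∈ A, ∃ j : Fin n, x = a * g j} ∧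
    ∀ x ∈ AddSubgroup.closure {x : R | ∃ a ∈ A, ∃ j : Fin n, x = a * g j},
      b * x ∈ AddSubgroup.closure {x : R | ∃ a ∈ A, ∃ j : Fin n, x = a * g j}

/-- An element is integral over `A` if all of its homogeneous components are. -/
def IsIntegralIn {R : Type*} [Ring R] (𝒜 : ZMod 2 → AddSubgroup R) [GradedRing 𝒜]
    (A W : Subring R) (b : R) : Prop :=
  ∀ i, IsIntegralElemIn 𝒜 A W (DirectSum.decompose 𝒜 b i : R)

/-- The `A`-span of a family `g`. -/
def SP {R : Type*} [Ring R] (A : Subring R) {ι : Type*} (g : ι → R) : AddSubgroup R :=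
  AddSubgroup.closure {x : R | ∃ a ∈ A, ∃ j : ι, x = a * g j}

section helpers

variable {R : Type*} [Ring R]

lemma mem_SP_iff (A : Subring R) {ι : Type*} [Fintype ι] [DecidableEq ι] (g : ι → R) (x : R) :
    x ∈ SP A g ↔ ∃ a : ι → R, (∀ j, a j ∈ A) ∧ x = ∑ j, a j * g j := by
  constructor
  · intro hx
    induction hx using AddSubgroup.closure_induction with
    | mem y hy =>
        obtain ⟨a, ha, j, rfl⟩ := hy
        refine ⟨fun k => if k = j then a else 0,
          fun k => by by_cases h : k = j <;> simp [h, ha, A.zero_mem], ?_⟩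
        rw [Finset.sum_eq_single j] <;> simp +contextual
    | zero => exact ⟨0, by simp [A.zero_mem], by simp⟩
    | add y z hy hz ihy ihz =>
        obtain ⟨ay, hay, rfl⟩ := ihy
        obtain ⟨az, haz, rfl⟩ := ihz
        exact ⟨ay + az, fun j => A.add_mem (hay j) (haz j),
          by simp [add_mul, Finset.sum_add_distrib]⟩
    | neg y hy ihy =>
        obtain ⟨ay, hay, rfl⟩ := ihy
        exact ⟨-ay, fun j => A.neg_mem (hay j), by simp [neg_mul]⟩
  · rintro ⟨a, ha, rfl⟩
    exact AddSubgroup.sum_mem _ fun j _ => AddSubgroup.subset_closure ⟨a j, ha j, j, rfl⟩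

lemma gen_mem_SP (A : Subring R) {ι : Type*} (g : ι → R) (j : ι) : g j ∈ SP A g :=
  AddSubgroup.subset_closure ⟨1, A.one_mem, j, (one_mul _).symm⟩

lemma SP_reindex (A : Subring R) {ι ι' : Type*} (e : ι' ≃ ι) (g : ι → R) :
    SP A (fun j => g (e j)) = SP A g := by
  unfold SP; congr 1; ext x
  exact ⟨fun ⟨a, ha, j, hx⟩ => ⟨a, ha, e j, hx⟩,
    fun ⟨a, ha, j, hx⟩ => ⟨a, ha, e.symm j, by simpa using hx⟩⟩

lemma smul_mem_SP (A : Subring R) {ι : Type*} (g : ι → R) {a : R} (ha : a ∈ A) :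
    ∀ x ∈ SP A g, a * x ∈ SP A g := by
  intro x hx
  induction hx using AddSubgroup.closure_induction with
  | mem y hy =>
      obtain ⟨a', ha', j, rfl⟩ := hy
      exact AddSubgroup.subset_closure ⟨a * a', A.mul_mem ha ha', j, (mul_assoc _ _ _).symm⟩
  | zero => simpa using (SP A g).zero_mem
  | add y z _ _ ihy ihz => rw [mul_add]; exact (SP A g).add_mem ihy ihz
  | neg y _ ihy => rw [mul_neg]; exact (SP A g).neg_mem ihy

end helpers

section graded

variable {R : Type*} [Ring R] (𝒜 : ZMod 2 → AddSubgroup R) [GradedRing 𝒜]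

lemma decompose_two_sum (x : R) :
    (decompose 𝒜 x 0 : R) + (decompose 𝒜 x 1 : R) = x := by
  classical
  calc (decompose 𝒜 x 0 : R) + (decompose 𝒜 x 1 : R)
      = ∑ i : ZMod 2, (decompose 𝒜 x i : R) := by
        exact (Fin.sum_univ_two (fun i => (decompose 𝒜 x i : R))).symm
    _ = ∑ i ∈ (decompose 𝒜 x).support, (decompose 𝒜 x i : R) :=
        (Finset.sum_subset (Finset.subset_univ _)
          (fun i _ hi => by simpa using DFinsupp.notMem_support_iff.mp hi)).symm
    _ = x := DirectSum.sum_support_decompose 𝒜 x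

lemma even_comm (hsc : SuperCommutative 𝒜) {x : R} (hx : x ∈ 𝒜 0) (y : R) :
    x * y = y * x := by
  have h0 := hsc 0 0 x _ hx (SetLike.coe_mem (decompose 𝒜 y 0))
  have h1 := hsc 0 1 x _ hx (SetLike.coe_mem (decompose 𝒜 y 1))
  have hv : (0 : ZMod 2).val = 0 := rfl
  rw [hv] at h0 h1
  simp only [Nat.zero_mul, pow_zero, one_smul] at h0 h1
  conv_lhs => rw [← decompose_two_sum 𝒜 y]
  conv_rhs => rw [← decompose_two_sum 𝒜 y]
  rw [mul_add, add_mul, h0, h1]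

/-- Moving a homogeneous element past an arbitrary element. -/
lemma move_homog (hsc : SuperCommutative 𝒜) {d : ZMod 2} {e : R} (he : e ∈ 𝒜 d) (a : R) :
    e * a = ((decompose 𝒜 a 0 : R) + ((-1 : ℤ) ^ d.val) • (decompose 𝒜 a 1 : R)) * e := by
  have h0 := hsc d 0 e _ he (SetLike.coe_mem (decompose 𝒜 a 0))
  have h1 := hsc d 1 e _ he (SetLike.coe_mem (decompose 𝒜 a 1))
  have hv0 : (0 : ZMod 2).val = 0 := rfl
  have hv1 : (1 : ZMod 2).val = 1 := rfl
  rw [hv0] at h0; rw [hv1] at h1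
  simp only [Nat.mul_zero, pow_zero, one_smul, Nat.mul_one] at h0 h1
  conv_lhs => rw [← decompose_two_sum 𝒜 a]
  rw [mul_add, add_mul, h0, h1, smul_mul_assoc]

/-- Product of two spans lands in the span of pairwise products, when the left
generators are even (hence central). -/
lemma mul_mem_SP_prod (hsc : SuperCommutative 𝒜) (A : Subring R)
    {k m : ℕ} (w : Fin k → R) (hw : ∀ u, w u ∈ 𝒜 0) (h : Fin m → R) :
    ∀ x ∈ SP A w, ∀ y ∈ SP A h, x * y ∈ SP A (fun p : Fin k × Fin m => w p.1 * h p.2) := by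
  intro x hx
  induction hx using AddSubgroup.closure_induction with
  | mem x' hx' =>
      obtain ⟨a, ha, u, rfl⟩ := hx'
      intro y hy
      induction hy using AddSubgroup.closure_induction with
      | mem y' hy' =>
          obtain ⟨a', ha', t, rfl⟩ := hy'
          have : (a * w u) * (a' * h t) = (a * a') * (w u * h t) := by
            rw [mul_assoc, ← mul_assoc (w u), even_comm 𝒜 hsc (hw u) a', mul_assoc,
              ← mul_assoc, ← mul_assoc]
          rw [this]
          exact AddSubgroup.subset_closure ⟨a * a', A.mul_mem ha ha', (u, t), rfl⟩
      | zero => simpa using AddSubgroup.zero_mem _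
      | add y z _ _ ihy ihz => rw [mul_add]; exact AddSubgroup.add_mem _ ihy ihz
      | neg y _ ihy => rw [mul_neg]; exact AddSubgroup.neg_mem _ ihy
  | zero => intro y hy; simpa using AddSubgroup.zero_mem _
  | add x₁ x₂ _ _ ih₁ ih₂ =>
      intro y hy; rw [add_mul]; exact AddSubgroup.add_mem _ (ih₁ y hy) (ih₂ y hy)
  | neg x₁ _ ih₁ =>
      intro y hy; rw [neg_mul]; exact AddSubgroup.neg_mem _ (ih₁ y hy)

/-- The key construction: a single even finitely generated unitary `A`-module stable
under every (homogeneous, `A`-integral) element of a list `L`. -/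
lemma stable_module (hsc : SuperCommutative 𝒜) (A B : Subring R)
    (hAgr : ∀ x ∈ A, ∀ i, (DirectSum.decompose 𝒜 x i : R) ∈ A)
    (L : List R)
    (hL : ∀ e ∈ L, (∃ d, e ∈ 𝒜 d) ∧ IsIntegralElemIn 𝒜 A B e) :
    ∃ (k : ℕ) (w : Fin k → R), (∀ u, w u ∈ 𝒜 0) ∧ (1 : R) ∈ SP A w ∧
      ∀ e ∈ L, ∀ x ∈ SP A w, e * x ∈ SP A w := by
  induction L with
  | nil =>
      exact ⟨1, fun _ => 1, fun _ => SetLike.one_mem_graded 𝒜,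
        AddSubgroup.subset_closure ⟨1, A.one_mem, 0, (one_mul 1).symm⟩, by simp⟩
  | cons e L ih =>
      obtain ⟨k, w, hw, h1Q, hQ⟩ := ih fun e' he' => hL e' (List.mem_cons_of_mem _ he')
      obtain ⟨⟨d, hd⟩, m, h, hh, h1M, hM⟩ := hL e (List.mem_cons_self)
      -- the product module
      set v : Fin k × Fin m → R := fun p => w p.1 * h p.2 with hv
      have hveven : ∀ p, v p ∈ 𝒜 0 := fun p => by
        simpa using SetLike.mul_mem_graded (hw p.1) (hh p.2).1
      have hprod : ∀ x ∈ SP A w, ∀ y ∈ SP A h, x * y ∈ SP A v :=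
        mul_mem_SP_prod 𝒜 hsc A w hw h
    -- stability of SP A v under a homogeneous element e₀, given e₀ * v p ∈ SP A v
      have key : ∀ (e₀ : R) (d₀ : ZMod 2), e₀ ∈ 𝒜 d₀ → (∀ p, e₀ * v p ∈ SP A v) →
          ∀ x ∈ SP A v, e₀ * x ∈ SP A v := by
        intro e₀ d₀ hd₀ hgen x hx
        induction hx using AddSubgroup.closure_induction with
        | mem y hy =>
            obtain ⟨a, ha, p, rfl⟩ := hy
            rw [← mul_assoc, move_homog 𝒜 hsc hd₀ a, mul_assoc]
            have haA : (decompose 𝒜 a 0 : R) + ((-1 : ℤ) ^ d₀.val) • (decompose 𝒜 a 1 : R)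
                ∈ A := A.add_mem (hAgr a ha 0)
              (A.toAddSubgroup.zsmul_mem (hAgr a ha 1) _)
            exact smul_mem_SP A v haA _ (hgen p)
        | zero => simpa using AddSubgroup.zero_mem _
        | add y z _ _ ihy ihz => rw [mul_add]; exact AddSubgroup.add_mem _ ihy ihz
        | neg y _ ihy => rw [mul_neg]; exact AddSubgroup.neg_mem _ ihy
      refine ⟨k * m, fun q => v (finProdFinEquiv.symm q), ?_, ?_, ?_⟩
      · intro u; exact hveven _
      · rw [show SP A (fun q => v (finProdFinEquiv.symm q)) = SP A v from
          SP_reindex A finProdFinEquiv.symm v]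
        simpa using hprod 1 h1Q 1 h1M
      · intro e₀ he₀
        rw [show SP A (fun q => v (finProdFinEquiv.symm q)) = SP A v from
          SP_reindex A finProdFinEquiv.symm v]
        rcases List.mem_cons.mp he₀ with rfl | he₀
        · refine key e₀ d hd fun p => ?_
          have h1 : e₀ * v p = w p.1 * (e₀ * h p.2) := by
            rw [hv, ← mul_assoc, ← even_comm 𝒜 hsc (hw p.1) e₀, mul_assoc]
          rw [h1]
          exact hprod _ (gen_mem_SP A w p.1) _ (hM _ (gen_mem_SP A h p.2))
        · obtain ⟨d₀, hd₀⟩ := (hL e₀ (List.mem_cons_of_mem _ he₀)).1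
          refine key e₀ d₀ hd₀ fun p => ?_
          have h1 : e₀ * v p = (e₀ * w p.1) * h p.2 := by rw [hv, ← mul_assoc]
          rw [h1]
          exact hprod _ (hQ e₀ he₀ _ (gen_mem_SP A w p.1)) _ (gen_mem_SP A h p.2)

end graded

/-- Transitivity of integrality for superrings `R ⊆ R' ⊆ R''` (here `A ⊆ B ⊆ R` are graded
subrings of the ambient superring `R = R''`): if `R''` is integral over `R'` and `R'` is
integral over `R`, then `R''` is integral over `R`. -/
theorem integral_transitivity {R : Type*} [Ring R]
    (𝒜 : ZMod 2 → AddSubgroup R) [GradedRing 𝒜]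
    (hsc : SuperCommutative 𝒜) (h2 : TwoRegular R)
    (A B : Subring R) (hAB : A ≤ B)
    (hAgr : ∀ x ∈ A, ∀ i, (DirectSum.decompose 𝒜 x i : R) ∈ A)
    (hBgr : ∀ x ∈ B, ∀ i, (DirectSum.decompose 𝒜 x i : R) ∈ B)
    (hBA : ∀ b ∈ B, IsIntegralIn 𝒜 A B b)
    (hRB : ∀ b : R, IsIntegralIn 𝒜 B ⊤ b) :
    ∀ b : R, IsIntegralIn 𝒜 A ⊤ b := by
  intro b i
  set c : R := (DirectSum.decompose 𝒜 b i : R) with hcdef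
  have hc : c ∈ 𝒜 i := SetLike.coe_mem _
  obtain ⟨n, g, hg, h1N, hN⟩ := hRB b i
  -- extract coefficients in B
  obtain ⟨γ, hγ, hγeq⟩ := (mem_SP_iff B g 1).mp h1N
  choose β hβ hβeq using fun j => (mem_SP_iff B g _).mp (hN _ (gen_mem_SP B g j))
  -- list of homogeneous components of all coefficients
  set Lb : List R := (List.finRange n).flatMap (fun j => γ j :: (List.finRange n).map (β j))
    with hLbdef
  have hLb : ∀ z ∈ Lb, z ∈ B := by
    intro z hz
    simp only [hLbdef, List.mem_flatMap, List.mem_finRange, List.mem_cons, List.mem_map,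
      true_and] at hz
    obtain ⟨j, rfl | ⟨k, _, rfl⟩⟩ := hz
    · exact hγ j
    · exact hβ j k
  set L : List R := Lb.flatMap (fun z => [(decompose 𝒜 z 0 : R), (decompose 𝒜 z 1 : R)])
    with hLdef
  have hL : ∀ e ∈ L, (∃ d, e ∈ 𝒜 d) ∧ IsIntegralElemIn 𝒜 A B e := by
    intro e he
    simp only [hLdef, List.mem_flatMap, List.mem_cons, List.mem_singleton,
      List.not_mem_nil, or_false] at he
    obtain ⟨z, hz, rfl | rfl⟩ := he
    · exact ⟨⟨0, SetLike.coe_mem _⟩, hBA z (hLb z hz) 0⟩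
    · exact ⟨⟨1, SetLike.coe_mem _⟩, hBA z (hLb z hz) 1⟩
  obtain ⟨k, w, hw, h1Q, hQ⟩ := stable_module 𝒜 hsc A B hAgr L hL
  -- Q is stable under each full coefficient
  have hstabB : ∀ z ∈ Lb, ∀ x ∈ SP A w, z * x ∈ SP A w := by
    intro z hz x hx
    have hmem : ∀ l : ZMod 2, (decompose 𝒜 z l : R) ∈ L := by
      intro l
      simp only [hLdef, List.mem_flatMap]
      refine ⟨z, hz, ?_⟩
      have hl : l = 0 ∨ l = 1 := by revert l; decide
      rcases hl with rfl | rfl <;> simp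
    rw [← decompose_two_sum 𝒜 z, add_mul]
    exact AddSubgroup.add_mem _ (hQ _ (hmem 0) x hx) (hQ _ (hmem 1) x hx)
  have hγLb : ∀ j, γ j ∈ Lb := by
    intro j
    simp only [hLbdef, List.mem_flatMap, List.mem_finRange, List.mem_cons, true_and]
    exact ⟨j, Or.inl rfl⟩
  have hβLb : ∀ j k', β j k' ∈ Lb := by
    intro j k'
    simp only [hLbdef, List.mem_flatMap, List.mem_finRange, List.mem_cons, List.mem_map,
      true_and]
    exact ⟨j, Or.inr ⟨k', by simp⟩⟩
  -- the final module
  set v : Fin k × Fin n → R := fun p => w p.1 * g p.2 with hv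
  have hprod : ∀ x ∈ SP A w, ∀ y ∈ SP A g, x * y ∈ SP A v :=
    mul_mem_SP_prod 𝒜 hsc A w hw g
  have h1T : (1 : R) ∈ SP A v := by
    rw [hγeq]
    refine AddSubgroup.sum_mem _ fun j _ => ?_
    have hγQ : γ j ∈ SP A w := by
      simpa using hstabB _ (hγLb j) 1 h1Q
    exact hprod _ hγQ _ (gen_mem_SP A g j)
  have hstabT : ∀ x ∈ SP A v, c * x ∈ SP A v := by
    intro x hx
    induction hx using AddSubgroup.closure_induction with
    | mem y hy =>
        obtain ⟨a, ha, p, rfl⟩ := hy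
        rw [← mul_assoc, move_homog 𝒜 hsc hc a, mul_assoc]
        have haA : (decompose 𝒜 a 0 : R) + ((-1 : ℤ) ^ i.val) • (decompose 𝒜 a 1 : R)
            ∈ A := A.add_mem (hAgr a ha 0) (A.toAddSubgroup.zsmul_mem (hAgr a ha 1) _)
        refine smul_mem_SP A v haA _ ?_
        -- c * v p ∈ SP A v
        have h1 : c * v p = w p.1 * (c * g p.2) := by
          rw [hv, ← mul_assoc, ← even_comm 𝒜 hsc (hw p.1) c, mul_assoc]
        rw [h1, hβeq p.2, Finset.mul_sum]
        refine AddSubgroup.sum_mem _ fun k' _ => ?_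
        have h2 : w p.1 * (β p.2 k' * g k') = (β p.2 k' * w p.1) * g k' := by
          rw [← mul_assoc, even_comm 𝒜 hsc (hw p.1) (β p.2 k')]
        rw [h2]
        exact hprod _ (hstabB _ (hβLb p.2 k') _ (gen_mem_SP A w p.1)) _ (gen_mem_SP A g k')
    | zero => simpa using AddSubgroup.zero_mem _
    | add y z _ _ ihy ihz => rw [mul_add]; exact AddSubgroup.add_mem _ ihy ihz
    | neg y _ ihy => rw [mul_neg]; exact AddSubgroup.neg_mem _ ihy
  refine ⟨k * n, fun q => v (finProdFinEquiv.symm q),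
    fun q => ⟨by simpa using SetLike.mul_mem_graded (hw _) (hg _).1, trivial⟩, ?_, ?_⟩
  · show (1 : R) ∈ SP A (fun q => v (finProdFinEquiv.symm q))
    rw [SP_reindex A finProdFinEquiv.symm v]
    exact h1T
  · intro x hx
    have hx' : x ∈ SP A (fun q => v (finProdFinEquiv.symm q)) := hx
    rw [SP_reindex A finProdFinEquiv.symm v] at hx'
    show c * x ∈ SP A (fun q => v (finProdFinEquiv.symm q))
    rw [SP_reindex A finProdFinEquiv.symm v]
    exact hstabT x hx'
end
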